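/- Let Z ∈ ℂ³ be a vector with ‖Z‖ = 1. Then the set {x : x a 3×3 complex matrix with xᵀ = x, x ∈ SU(3), and x·conj(Z) = Z} equals the set {Q·Qᵀ : Q ∈ SU(3) and Q·e₁ = Z}, where conj(Z) denotes the componentwise complex conjugate of Z and e₁ = (1,0,0)ᵀ. -/

import Mathlib

open scoped InnerProductSpace in
open Matrix in
lemma exists_SU3_col (Z : Fin 3 → ℂ) (hZ : ∑ i, ‖Z i‖ ^ 2 = 1) :
    ∃ U ∈ Matrix.specialUnitaryGroup (Fin 3) ℂ, (∀ i, U i 0 = Z i) := by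
  classical
  set Z' : EuclideanSpace ℂ (Fin 3) := WithLp.toLp 2 Z with hZ'def
  have hZn : (⟪Z', Z'⟫_ℂ) = 1 := by
    rw [inner_self_eq_norm_sq_to_K]
    have : ‖Z'‖ ^ 2 = (1:ℝ) := by
      rw [EuclideanSpace.norm_eq, Real.sq_sqrt (by positivity)]
      simpa using hZ
    have h1 : ‖Z'‖ = 1 := by nlinarith [norm_nonneg Z']
    rw [h1]; norm_num
  have horth : Orthonormal ℂ (({0} : Set (Fin 3)).restrict (fun _ : Fin 3 => Z')) := by
    rw [orthonormal_iff_ite]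
    rintro ⟨i, hi⟩ ⟨j, hj⟩
    simp only [Set.mem_singleton_iff] at hi hj
    subst hi; subst hj
    rw [if_pos rfl]; exact hZn
  obtain ⟨b, hb⟩ := horth.exists_orthonormalBasis_extension_of_card_eq (by simp) 
  have hb0 : b 0 = Z' := hb 0 rfl
  set U₀ : Matrix (Fin 3) (Fin 3) ℂ := fun i j => b j i with hU₀def
  have hU0 : U₀ ∈ Matrix.unitaryGroup (Fin 3) ℂ := by
    rw [Matrix.mem_unitaryGroup_iff']
    ext i j
    have hip : (⟪b i, b j⟫_ℂ) = if i = j then 1 else 0 :=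
      orthonormal_iff_ite.mp b.orthonormal i j
    rw [PiLp.inner_apply] at hip
    simp only [Matrix.mul_apply, Matrix.one_apply, Matrix.star_apply, RCLike.inner_apply]
      at hip ⊢
    simpa [hU₀def, mul_comm] using hip
  set d : ℂ := U₀.det with hddef
  have hd : star d * d = 1 := by
    have := Matrix.det_of_mem_unitary hU0
    rw [Unitary.mem_iff] at this
    exact this.1
  set D : Matrix (Fin 3) (Fin 3) ℂ :=
    Matrix.diagonal (fun j => if j = 2 then star d else 1) with hDdef
  have hD : D ∈ Matrix.unitaryGroup (Fin 3) ℂ := by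
    rw [Matrix.mem_unitaryGroup_iff']
    rw [hDdef, Matrix.star_eq_conjTranspose, Matrix.diagonal_conjTranspose,
      Matrix.diagonal_mul_diagonal]
    ext i j
    rcases eq_or_ne i j with rfl | hij
    · rcases eq_or_ne i 2 with rfl | hi2 <;>
        simp_all [Matrix.diagonal_apply, mul_comm]
    · simp [Matrix.diagonal_apply, hij, Matrix.one_apply, hij]
  refine ⟨U₀ * D, ?_, ?_⟩
  · rw [Matrix.mem_specialUnitaryGroup_iff]
    constructor
    · exact Submonoid.mul_mem _ hU0 hD
    · rw [Matrix.det_mul, hDdef, Matrix.det_diagonal, Fin.prod_univ_three]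
      simpa using mul_comm d (star d) ▸ hd
  · intro i
    rw [Matrix.mul_apply, Fin.sum_univ_three]
    have : (U₀ * D) i 0 = U₀ i 0 := by
      rw [Matrix.mul_apply, Fin.sum_univ_three]
      simp [hDdef, Matrix.diagonal_apply]
    rw [Matrix.mul_apply, Fin.sum_univ_three] at this
    rw [this, hU₀def]
    simp [hb0, hZ'def]

open Matrix in
lemma transpose_mem_SU3 {Q : Matrix (Fin 3) (Fin 3) ℂ}
    (h : Q ∈ Matrix.specialUnitaryGroup (Fin 3) ℂ) :
    Q.transpose ∈ Matrix.specialUnitaryGroup (Fin 3) ℂ := by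
  rw [Matrix.mem_specialUnitaryGroup_iff] at h ⊢
  obtain ⟨hu, hd⟩ := h
  refine ⟨?_, by rwa [Matrix.det_transpose]⟩
  have hu' := Matrix.mem_unitaryGroup_iff'.mp hu
  rw [Matrix.mem_unitaryGroup_iff]
  have : star Q.transpose = (star Q).transpose := by
    rw [Matrix.star_eq_conjTranspose, Matrix.star_eq_conjTranspose]
    ext i j
    simp [Matrix.conjTranspose_apply]
  rw [this, ← Matrix.transpose_mul, ← Matrix.transpose_one, hu']

set_option maxHeartbeats 1000000 in
open Matrix Complex in
lemma takagi_aux (y : Matrix (Fin 3) (Fin 3) ℂ) (hsym : y.transpose = y)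
    (hy : y ∈ Matrix.specialUnitaryGroup (Fin 3) ℂ)
    (h0 : ∀ i, y i 0 = (Pi.single (0 : Fin 3) (1 : ℂ) : Fin 3 → ℂ) i) :
    ∃ P ∈ Matrix.specialUnitaryGroup (Fin 3) ℂ,
      (∀ i, P i 0 = (Pi.single (0 : Fin 3) (1 : ℂ) : Fin 3 → ℂ) i) ∧ P * P.transpose = y := by
  obtain ⟨hyu, hyd⟩ := Matrix.mem_specialUnitaryGroup_iff.mp hy
  have hsym' : ∀ i j, y i j = y j i := by
    intro i j; conv_lhs => rw [← hsym, Matrix.transpose_apply]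
  have hy00 : y 0 0 = 1 := by simpa using h0 0
  have hy10 : y 1 0 = 0 := by simpa using h0 1
  have hy20 : y 2 0 = 0 := by simpa using h0 2
  have hy01 : y 0 1 = 0 := by rw [hsym' 0 1]; exact hy10
  have hy02 : y 0 2 = 0 := by rw [hsym' 0 2]; exact hy20
  have hy21 : y 2 1 = y 1 2 := hsym' 2 1
  set a := y 1 1 with hadef
  set bb := y 1 2 with hbbdef
  set dd := y 2 2 with hdddef
  have huy := Matrix.mem_unitaryGroup_iff'.mp hyu
  have e1 : (starRingEnd ℂ) a * a + (starRingEnd ℂ) bb * bb = 1 := by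
    have h := (Matrix.ext_iff.mpr huy) 1 1
    simpa [Matrix.mul_apply, Fin.sum_univ_three, Matrix.star_apply, Matrix.one_apply,
      hy01, hy21] using h
  have e2 : (starRingEnd ℂ) a * bb + (starRingEnd ℂ) bb * dd = 0 := by
    have h := (Matrix.ext_iff.mpr huy) 1 2
    simpa [Matrix.mul_apply, Fin.sum_univ_three, Matrix.star_apply, Matrix.one_apply,
      hy01, hy02, hy21] using h
  have e3 : a * dd - bb * bb = 1 := by
    have h := hyd
    rw [Matrix.det_fin_three] at h
    rw [hy00, hy01, hy02, hy10, hy20, hy21] at h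
    linear_combination h
  have hdd : dd = (starRingEnd ℂ) a := by
    linear_combination (-dd) * e1 + bb * e2 + (starRingEnd ℂ) a * e3
  have hbre : bb.re = 0 := by
    have h : bb * (bb + (starRingEnd ℂ) bb) = 0 := by
      rw [hdd] at e3
      linear_combination e1 - e3
    rcases mul_eq_zero.mp h with h' | h'
    · simp [h']
    · have := congrArg Complex.re h'
      simp [Complex.add_re, Complex.conj_re] at this
      linarith
  set α := a.re with hαdef
  set β := a.im with hβdef
  set γ := bb.im with hγdef
  have ha : a = (α : ℂ) + (β : ℂ) * I := by
    rw [hαdef, hβdef]; exact (Complex.re_add_im a).symm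
  have hbb : bb = (γ : ℂ) * I := by
    have := (Complex.re_add_im bb).symm
    rwa [hbre, Complex.ofReal_zero, zero_add] at this
  have hconj : (starRingEnd ℂ) a = (α : ℂ) - (β : ℂ) * I := by
    rw [ha]; simp [Complex.conj_ofReal, Complex.conj_I]; ring
  have hnorm : α ^ 2 + β ^ 2 + γ ^ 2 = 1 := by
    have hC : ((α : ℂ)) ^ 2 + (β : ℂ) ^ 2 + (γ : ℂ) ^ 2 = 1 := by
      have h := e3
      rw [hdd, hconj, ha, hbb] at h
      linear_combination h + ((β:ℂ)^2 + (γ:ℂ)^2) * Complex.I_sq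
    exact_mod_cast hC
  by_cases hαm : α = -1
  · -- degenerate case: y = diag(1,-1,-1)
    have hβ0 : β = 0 := by nlinarith
    have hγ0 : γ = 0 := by nlinarith
    have ha' : a = -1 := by rw [ha, hαm, hβ0]; norm_num
    have hbb' : bb = 0 := by rw [hbb, hγ0]; norm_num
    have hdd' : dd = -1 := by rw [hdd, hconj, hαm, hβ0]; norm_num
    refine ⟨!![1,0,0; 0,0,I; 0,I,0], ?_, ?_, ?_⟩
    · rw [Matrix.mem_specialUnitaryGroup_iff]
      constructor
      · rw [Matrix.mem_unitaryGroup_iff']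
        ext i j
        fin_cases i <;> fin_cases j <;>
          simp [Matrix.mul_apply, Fin.sum_univ_three, Matrix.star_apply, Matrix.one_apply,
            Complex.conj_I, Matrix.vecHead, Matrix.vecTail]
      · rw [Matrix.det_fin_three]
        simp [Matrix.vecHead, Matrix.vecTail]
    · intro i; fin_cases i <;> simp [Matrix.vecHead, Matrix.vecTail]
    · ext i j
      fin_cases i <;> fin_cases j <;>
        simp [Matrix.mul_apply, Fin.sum_univ_three, Matrix.transpose_apply,
          hy00, hy01, hy02, hy10, hy20, hy21, ← hadef, ← hbbdef, ← hdddef,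
          ha', hbb', hdd', Complex.I_mul_I, Matrix.vecHead, Matrix.vecTail]
  · -- generic case
    have hα1 : α ≤ 1 := by nlinarith
    have hαlb : -1 ≤ α := by nlinarith
    have hαpos : 0 < 1 + α := by
      rcases lt_or_eq_of_le hαlb with h | h
      · linarith
      · exact absurd h.symm hαm
    set c : ℝ := Real.sqrt ((1 + α) / 2) with hcdef
    have hcpos : 0 < c := Real.sqrt_pos.mpr (by linarith)
    have hc2 : c ^ 2 = (1 + α) / 2 := Real.sq_sqrt (by linarith)
    have hCne : (c : ℂ) ≠ 0 := by exact_mod_cast hcpos.ne'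
    have hC2 : (c : ℂ) ^ 2 = (1 + (α : ℂ)) / 2 := by exact_mod_cast hc2
    set r : ℝ := β / (2 * c) with hrdef
    set s : ℝ := γ / (2 * c) with hsdef
    have hrs : r ^ 2 + s ^ 2 = (1 - α) / 2 := by
      rw [hrdef, hsdef]
      rw [div_pow, div_pow, ← add_div, div_eq_iff (by positivity)]
      nlinarith
    have hreal1 : c ^ 2 + r ^ 2 + s ^ 2 = 1 := by linarith [hrs, hc2]
    have hreal2 : c ^ 2 - r ^ 2 - s ^ 2 = α := by linarith [hrs, hc2]
    have hreal3 : 2 * c * r = β := by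
      rw [hrdef]; field_simp
    have hreal4 : 2 * c * s = γ := by
      rw [hsdef]; field_simp
    have h1C : (c : ℂ) ^ 2 + (r : ℂ) ^ 2 + (s : ℂ) ^ 2 = 1 := by exact_mod_cast hreal1
    have h2C : (c : ℂ) ^ 2 - (r : ℂ) ^ 2 - (s : ℂ) ^ 2 = (α : ℂ) := by exact_mod_cast hreal2
    have h3C : 2 * (c : ℂ) * (r : ℂ) = (β : ℂ) := by exact_mod_cast hreal3
    have h4C : 2 * (c : ℂ) * (s : ℂ) = (γ : ℂ) := by exact_mod_cast hreal4
    set u : ℂ := (c : ℂ) + (r : ℂ) * I with hudef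
    set v : ℂ := (s : ℂ) * I with hvdef
    set w : ℂ := (c : ℂ) - (r : ℂ) * I with hwdef
    have hcu : (starRingEnd ℂ) u = w := by
      rw [hudef, hwdef]; simp [Complex.conj_ofReal, Complex.conj_I]; try ring
    have hcv : (starRingEnd ℂ) v = -v := by
      rw [hvdef]; simp [Complex.conj_ofReal, Complex.conj_I]
    have hcw : (starRingEnd ℂ) w = u := by
      rw [hudef, hwdef]; simp [Complex.conj_ofReal, Complex.conj_I]; try ring
    have key1 : u * w - v * v = 1 := by
      rw [hudef, hvdef, hwdef]
      linear_combination h1C + (-(r:ℂ)^2 - (s:ℂ)^2) * Complex.I_sq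
    have key2 : u * u + v * v = a := by
      rw [hudef, hvdef, ha]
      linear_combination h2C + ((r:ℂ)^2 + (s:ℂ)^2) * Complex.I_sq + Complex.I * h3C
    have key3 : u * v + v * w = bb := by
      rw [hudef, hvdef, hwdef, hbb]
      linear_combination Complex.I * h4C
    have key4 : v * v + w * w = dd := by
      rw [hvdef, hwdef, hdd, hconj]
      linear_combination h2C + ((r:ℂ)^2 + (s:ℂ)^2) * Complex.I_sq - Complex.I * h3C
    refine ⟨!![1,0,0; 0,u,v; 0,v,w], ?_, ?_, ?_⟩
    · rw [Matrix.mem_specialUnitaryGroup_iff]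
      constructor
      · rw [Matrix.mem_unitaryGroup_iff']
        ext i j
        fin_cases i <;> fin_cases j <;>
          simp [Matrix.mul_apply, Fin.sum_univ_three, Matrix.star_apply, Matrix.one_apply,
            hcu, hcv, hcw, Matrix.vecHead, Matrix.vecTail] <;>
          (first | linear_combination key1 | ring)
      · rw [Matrix.det_fin_three]
        simp [Matrix.vecHead, Matrix.vecTail]
        linear_combination key1
    · intro i; fin_cases i <;> simp [Matrix.vecHead, Matrix.vecTail]
    · ext i j
      fin_cases i <;> fin_cases j <;>
        simp [Matrix.mul_apply, Fin.sum_univ_three, Matrix.transpose_apply,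
          hy00, hy01, hy02, hy10, hy20, hy21, ← hadef, ← hbbdef, ← hdddef,
          Matrix.vecHead, Matrix.vecTail]
      · linear_combination key2
      · linear_combination key3
      · linear_combination key3
      · linear_combination key4

open Matrix in
lemma star_mem_SU3 {Q : Matrix (Fin 3) (Fin 3) ℂ}
    (h : Q ∈ Matrix.specialUnitaryGroup (Fin 3) ℂ) :
    star Q ∈ Matrix.specialUnitaryGroup (Fin 3) ℂ := by
  rw [Matrix.mem_specialUnitaryGroup_iff] at h ⊢
  refine ⟨Unitary.star_mem h.1, ?_⟩
  rw [Matrix.star_eq_conjTranspose, Matrix.det_conjTranspose, h.2, star_one]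

/-- For a unit vector `Z ∈ ℂ³`, the set of symmetric matrices `x ∈ SU(3)` with
`x·conj(Z) = Z` equals the set `{Q·Qᵀ : Q ∈ SU(3), Q·e₁ = Z}`. -/
theorem stmt7 (Z : Fin 3 → ℂ) (hZ : ∑ i, ‖Z i‖ ^ 2 = 1) :
    {x : Matrix (Fin 3) (Fin 3) ℂ |
        x.transpose = x ∧ x ∈ Matrix.specialUnitaryGroup (Fin 3) ℂ ∧
        x.mulVec (fun i => starRingEnd ℂ (Z i)) = Z} =
      {x : Matrix (Fin 3) (Fin 3) ℂ |
        ∃ Q ∈ Matrix.specialUnitaryGroup (Fin 3) ℂ,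
          Q.mulVec (Pi.single 0 1) = Z ∧ x = Q * Q.transpose} := by
  ext x
  simp only [Set.mem_setOf_eq]
  constructor
  · rintro ⟨hsym, hx, hxz⟩
    obtain ⟨U, hU, hUcol⟩ := exists_SU3_col Z hZ
    obtain ⟨hUu, hUd⟩ := Matrix.mem_specialUnitaryGroup_iff.mp hU
    have hUe : U.mulVec (Pi.single 0 1) = Z := by
      rw [Matrix.mulVec_single_one]; funext i
      rw [Matrix.col_apply]; exact hUcol i
    set V := star U with hVdef
    have hVU : V * U = 1 := Matrix.mem_unitaryGroup_iff'.mp hUu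
    have hUV : U * V = 1 := Matrix.mem_unitaryGroup_iff.mp hUu
    set y := V * x * V.transpose with hydef
    have hysym : y.transpose = y := by
      rw [hydef, Matrix.transpose_mul, Matrix.transpose_mul, Matrix.transpose_transpose,
        hsym, mul_assoc]
    have hymem : y ∈ Matrix.specialUnitaryGroup (Fin 3) ℂ :=
      mul_mem (mul_mem (star_mem_SU3 hU) hx) (transpose_mem_SU3 (star_mem_SU3 hU))
    have hVtZ : V.transpose.mulVec (Pi.single 0 1) = fun i => starRingEnd ℂ (Z i) := by
      rw [Matrix.mulVec_single_one]
      funext i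
      rw [Matrix.col_apply, Matrix.transpose_apply, hVdef, Matrix.star_eq_conjTranspose, Matrix.conjTranspose_apply, hUcol i]
      rfl
    have hVZ : V.mulVec Z = Pi.single 0 1 := by
      rw [← hUe, Matrix.mulVec_mulVec, hVU, Matrix.one_mulVec]
    have hymul : y.mulVec (Pi.single 0 1) = Pi.single 0 1 := by
      rw [hydef, ← Matrix.mulVec_mulVec, ← Matrix.mulVec_mulVec, hVtZ, hxz, hVZ]
    have hycol : ∀ i, y i 0 = (Pi.single (0 : Fin 3) (1 : ℂ) : Fin 3 → ℂ) i := by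
      intro i
      have h := congrFun hymul i
      rw [Matrix.mulVec_single_one] at h
      rw [← h, Matrix.col_apply]
    obtain ⟨P, hP, hPcol, hPy⟩ := takagi_aux y hysym hymem hycol
    refine ⟨U * P, mul_mem hU hP, ?_, ?_⟩
    · have hPe : P.mulVec (Pi.single 0 1) = Pi.single 0 1 := by
        rw [Matrix.mulVec_single_one]; funext i
        rw [Matrix.col_apply]; exact hPcol i
      rw [← Matrix.mulVec_mulVec, hPe, hUe]
    · have h1 : V.transpose * U.transpose = 1 := by
        rw [← Matrix.transpose_mul, hUV, Matrix.transpose_one]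
      have h2 : (U * P) * (U * P).transpose = U * (P * P.transpose) * U.transpose := by
        rw [Matrix.transpose_mul]; noncomm_ring
      rw [h2, hPy, hydef]
      have h3 : U * (V * x * V.transpose) * U.transpose =
          (U * V) * x * (V.transpose * U.transpose) := by noncomm_ring
      rw [h3, hUV, h1, one_mul, mul_one]
  · rintro ⟨Q, hQ, hQ1, rfl⟩
    obtain ⟨hQu, hQd⟩ := Matrix.mem_specialUnitaryGroup_iff.mp hQ
    refine ⟨?_, mul_mem hQ (transpose_mem_SU3 hQ), ?_⟩
    · rw [Matrix.transpose_mul, Matrix.transpose_transpose]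
    · have key : (star Q).mulVec Z = Pi.single 0 1 := by
        rw [← hQ1, Matrix.mulVec_mulVec, Matrix.mem_unitaryGroup_iff'.mp hQu,
          Matrix.one_mulVec]
      have hQt : Q.transpose.mulVec (fun i => starRingEnd ℂ (Z i)) = Pi.single 0 1 := by
        funext i
        have h2 : (starRingEnd ℂ) ((star Q).mulVec Z i) =
            Q.transpose.mulVec (fun i => starRingEnd ℂ (Z i)) i := by
          simp [Matrix.mulVec, dotProduct, map_sum, Matrix.star_apply,
            Matrix.transpose_apply, mul_comm]
        rw [← h2, congrFun key i]
        simp [Pi.single_apply, apply_ite]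
      rw [← Matrix.mulVec_mulVec, hQt, hQ1]
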